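/- Let G be a Garside group with positive monoid G⁺ and Garside element Δ, let g ∈ G and n ≥ 1. Suppose r is the greatest element of {t ∈ ℤ : Δ^t ≤_L h for some conjugate h of g}, m is the greatest element of {t ∈ ℤ : Δ^t ≤_L h for some conjugate h of gⁿ}, s is the least element of {t ∈ ℤ : h ≤_L Δ^t for some conjugate h of g}, and u is the least element of {t ∈ ℤ : h ≤_L Δ^t for some conjugate h of gⁿ}. Then r = ⌊m/n⌋ and s = ⌈u/n⌉. In particular, r ≥ 0 if and only if m ≥ 0, and s ≤ 0 if and only if u ≤ 0. -/

import Mathlib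

/-- `a` left-divides `b` in the monoid `M`. -/
def dvdL {M : Type*} [Monoid M] (a b : M) : Prop := ∃ c, a * c = b

/-- `a` right-divides `b` in the monoid `M`. -/
def dvdR {M : Type*} [Monoid M] (a b : M) : Prop := ∃ c, c * a = b

/-- `L(a)`, the set of left divisors of `a`. -/
def Lset {M : Type*} [Monoid M] (a : M) : Set M := {x | dvdL x a}

/-- `R(a)`, the set of right divisors of `a`. -/
def Rset {M : Type*} [Monoid M] (a : M) : Set M := {x | dvdR x a}

/-- `a` is an atom: `a ≠ 1` and `a = b * c` implies `b = 1` or `c = 1`. -/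
def IsAtomElt {M : Type*} [Monoid M] (a : M) : Prop :=
  a ≠ 1 ∧ ∀ b c : M, a = b * c → b = 1 ∨ c = 1

/-- `M` is atomic: every element is a finite product of atoms, and the lengths of
expressions of a given element as products of atoms are bounded above. -/
def Atomic (M : Type*) [Monoid M] : Prop :=
  (∀ a : M, ∃ l : List M, (∀ x ∈ l, IsAtomElt x) ∧ l.prod = a) ∧
  (∀ a : M, ∃ N : ℕ, ∀ l : List M, (∀ x ∈ l, IsAtomElt x) → l.prod = a → l.length ≤ N)

/-- `Δ` is a Garside element: `L(Δ) = R(Δ)` and `L(Δ)` generates `M`. -/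
def IsGarsideElt {M : Type*} [Monoid M] (Δ : M) : Prop :=
  Lset Δ = Rset Δ ∧ Submonoid.closure (Lset Δ) = ⊤

/-- `d` is a greatest common lower bound of `a` and `b` with respect to `≤_L`. -/
def IsGlbL {M : Type*} [Monoid M] (a b d : M) : Prop :=
  dvdL d a ∧ dvdL d b ∧ ∀ c : M, dvdL c a → dvdL c b → dvdL c d

/-- `d` is a least common upper bound of `a` and `b` with respect to `≤_L`. -/
def IsLubL {M : Type*} [Monoid M] (a b d : M) : Prop :=
  dvdL a d ∧ dvdL b d ∧ ∀ c : M, dvdL a c → dvdL b c → dvdL d c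

/-- `d` is a greatest common lower bound of `a` and `b` with respect to `≤_R`. -/
def IsGlbR {M : Type*} [Monoid M] (a b d : M) : Prop :=
  dvdR d a ∧ dvdR d b ∧ ∀ c : M, dvdR c a → dvdR c b → dvdR c d

/-- `d` is a least common upper bound of `a` and `b` with respect to `≤_R`. -/
def IsLubR {M : Type*} [Monoid M] (a b d : M) : Prop :=
  dvdR a d ∧ dvdR b d ∧ ∀ c : M, dvdR a c → dvdR b c → dvdR d c

/-- `M` is a Garside monoid: finitely generated, left and right cancellative, atomic,
`≤_L`- and `≤_R`-lattice conditions, and it possesses a Garside element. -/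
def IsGarsideMonoid (M : Type*) [Monoid M] : Prop :=
  (∃ S : Set M, S.Finite ∧ Submonoid.closure S = ⊤) ∧
  (∀ a b c : M, a * b = a * c → b = c) ∧
  (∀ a b c : M, b * a = c * a → b = c) ∧
  Atomic M ∧
  (∀ a b : M, ∃ d, IsGlbL a b d) ∧
  (∀ a b : M, ∃ d, IsLubL a b d) ∧
  (∀ a b : M, ∃ d, IsGlbR a b d) ∧
  (∀ a b : M, ∃ d, IsLubR a b d) ∧
  (∃ Δ : M, IsGarsideElt Δ)

/-- Group-level left divisibility: `a ≤_L b` iff `a⁻¹ * b` is positive. -/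
def gdvdL {G : Type*} [Group G] (P : Submonoid G) (a b : G) : Prop := a⁻¹ * b ∈ P

/-- Group-level right divisibility: `a ≤_R b` iff `b * a⁻¹` is positive. -/
def gdvdR {G : Type*} [Group G] (P : Submonoid G) (a b : G) : Prop := b * a⁻¹ ∈ P

/-- `G` is a Garside group with positive monoid `P` and chosen Garside element `Δ`:
`P` is a Garside monoid, every element of `G` is a fraction `a * b⁻¹` of positive
elements, and `Δ` is a Garside element of `P`. -/
def IsGarsideGroup {G : Type*} [Group G] (P : Submonoid G) (Δ : G) : Prop :=
  IsGarsideMonoid P ∧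
  (∀ g : G, ∃ a b : P, g = (a : G) * (b : G)⁻¹) ∧
  ∃ hΔ : Δ ∈ P, IsGarsideElt (⟨Δ, hΔ⟩ : P)

section Aux
variable {G : Type*} [Group G] {P : Submonoid G} {Δ : G}

lemma gdvdL_refl (a : G) : gdvdL P a a := by
  simpa [gdvdL] using one_mem P

lemma gdvdL_trans {a b c : G} (h1 : gdvdL P a b) (h2 : gdvdL P b c) : gdvdL P a c := by
  have := mul_mem h1 h2
  simpa [gdvdL, mul_assoc] using this

lemma gdvdL_mul_left (x : G) {a b : G} : gdvdL P (x * a) (x * b) ↔ gdvdL P a b := by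
  unfold gdvdL
  constructor <;> intro h <;> [skip; skip] <;>
    · convert h using 1
      group

/-- one-step tau: conjugation by Δ preserves P in both directions. -/
lemma tau_one (hΔ : Δ ∈ P) (hGar : IsGarsideElt (⟨Δ, hΔ⟩ : P)) {p : G} (hp : p ∈ P) :
    Δ⁻¹ * p * Δ ∈ P ∧ Δ * p * Δ⁻¹ ∈ P := by
  obtain ⟨hLR, hgen⟩ := hGar
  -- promote p to an element of P and use closure induction
  have key : ∀ q : P, (Δ⁻¹ * (q : G) * Δ ∈ P ∧ Δ * (q : G) * Δ⁻¹ ∈ P) := by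
    intro q
    have hq : q ∈ Submonoid.closure (Lset (⟨Δ, hΔ⟩ : P)) := by
      rw [hgen]; trivial
    induction hq using Submonoid.closure_induction with
    | mem x hx =>
      obtain ⟨c, hc⟩ := hx
      have hcG : (x : G) * (c : G) = Δ := by
        simpa using congrArg (Subtype.val) hc
      constructor
      · -- Δ⁻¹ x Δ = c⁻¹ Δ ∈ P since c ∈ Rset Δ = Lset Δ
        have hcR : c ∈ Rset (⟨Δ, hΔ⟩ : P) := ⟨x, hc⟩
        have hcL : c ∈ Lset (⟨Δ, hΔ⟩ : P) := by rw [hLR]; exact hcR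
        obtain ⟨e, he⟩ := hcL
        have heG : (c : G) * (e : G) = Δ := by simpa using congrArg (Subtype.val) he
        have hx : (x : G) * Δ = Δ * (e : G) := by
          conv_lhs => rw [← heG]
          rw [← mul_assoc, hcG]
        have : Δ⁻¹ * (x : G) * Δ = (e : G) := by
          rw [mul_assoc, hx]; group
        rw [this]; exact e.2
      · -- Δ x Δ⁻¹ : x ∈ Lset = Rset, ∃ c₂, c₂ x = Δ, then x Δ⁻¹ = c₂⁻¹, Δ x Δ⁻¹ = Δ c₂⁻¹
        have hxR : x ∈ Rset (⟨Δ, hΔ⟩ : P) := by rw [← hLR]; exact ⟨c, hc⟩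
        obtain ⟨c₂, hc₂⟩ := hxR
        have hc₂G : (c₂ : G) * (x : G) = Δ := by simpa using congrArg (Subtype.val) hc₂
        have hc₂L : c₂ ∈ Lset (⟨Δ, hΔ⟩ : P) := ⟨x, hc₂⟩
        have hc₂R : c₂ ∈ Rset (⟨Δ, hΔ⟩ : P) := by rw [← hLR]; exact hc₂L
        obtain ⟨e, he⟩ := hc₂R
        have heG : (e : G) * (c₂ : G) = Δ := by simpa using congrArg (Subtype.val) he
        have hx : Δ * (x : G) = (e : G) * Δ := by
          conv_lhs => rw [← heG]
          rw [mul_assoc, hc₂G]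
        have : Δ * (x : G) * Δ⁻¹ = (e : G) := by
          rw [hx]; group
        rw [this]; exact e.2
    | one => constructor <;> · simpa using one_mem P
    | mul x y hx hy ihx ihy =>
      constructor
      · have : Δ⁻¹ * ((x : G) * y) * Δ = (Δ⁻¹ * x * Δ) * (Δ⁻¹ * y * Δ) := by group
        rw [Submonoid.coe_mul, this]; exact mul_mem ihx.1 ihy.1
      · have : Δ * ((x : G) * y) * Δ⁻¹ = (Δ * x * Δ⁻¹) * (Δ * y * Δ⁻¹) := by group
        rw [Submonoid.coe_mul, this]; exact mul_mem ihx.2 ihy.2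
  exact key ⟨p, hp⟩

end Aux
section Aux2
variable {G : Type*} [Group G] {P : Submonoid G} {Δ : G}

/-- τ^k preserves P for all integers k. -/
lemma tau_zpow (hΔ : Δ ∈ P) (hGar : IsGarsideElt (⟨Δ, hΔ⟩ : P)) (k : ℤ) {p : G} (hp : p ∈ P) :
    Δ ^ k * p * Δ ^ (-k) ∈ P := by
  induction k using Int.induction_on with
  | zero => simpa using hp
  | succ i ih =>
    have heq : Δ ^ ((i : ℤ) + 1) * p * Δ ^ (-((i : ℤ) + 1)) =
        Δ * (Δ ^ (i : ℤ) * p * Δ ^ (-(i : ℤ))) * Δ⁻¹ := by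
      group
    rw [heq]
    exact (tau_one hΔ hGar ih).2
  | pred i ih =>
    have heq : Δ ^ (-(i : ℤ) - 1) * p * Δ ^ (-(-(i : ℤ) - 1)) =
        Δ⁻¹ * (Δ ^ (-(i : ℤ)) * p * Δ ^ (-(-(i : ℤ)))) * Δ := by
      group
    rw [heq]
    exact (tau_one hΔ hGar ih).1

lemma zpow_mem_of_nonneg (hΔ : Δ ∈ P) {k : ℤ} (hk : 0 ≤ k) : Δ ^ k ∈ P := by
  lift k to ℕ using hk with j
  rw [zpow_natCast]
  exact pow_mem hΔ j

/-- Every element of G is a left fraction of positives. -/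
lemma left_fraction (hG : IsGarsideGroup P Δ) (g : G) :
    ∃ a b : P, g = (a : G)⁻¹ * (b : G) := by
  obtain ⟨p, q, hpq⟩ := hG.2.1 g
  obtain ⟨d, hd⟩ := hG.1.2.2.2.2.2.2.2.1 p q
  obtain ⟨p', hp'⟩ := hd.1
  obtain ⟨q', hq'⟩ := hd.2.1
  refine ⟨p', q', ?_⟩
  have hp'G : (p' : G) * p = d := by simpa using congrArg Subtype.val hp'
  have hq'G : (q' : G) * q = d := by simpa using congrArg Subtype.val hq'
  rw [hpq]
  rw [← hq'G] at hp'G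
  -- p' * p = q' * q, so p * q⁻¹ = p'⁻¹ * q'
  have : (p : G) = (p' : G)⁻¹ * (q' : G) * q := by
    rw [mul_assoc, ← hp'G]; group
  rw [this]; group

/-- For finitely many elements there is a common positive left multiplier. -/
lemma common_left_mult (hG : IsGarsideGroup P Δ) (a b : G) :
    ∃ z : G, z ∈ P ∧ z * a ∈ P ∧ z * b ∈ P := by
  obtain ⟨p₁, q₁, h₁⟩ := left_fraction hG a
  obtain ⟨p₂, q₂, h₂⟩ := left_fraction hG ((p₁ : G) * b)
  refine ⟨(p₂ : G) * (p₁ : G), mul_mem p₂.2 p₁.2, ?_, ?_⟩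
  · have : (p₂ : G) * (p₁ : G) * a = (p₂ : G) * (q₁ : G) := by rw [h₁]; group
    rw [this]; exact mul_mem p₂.2 q₁.2
  · have : (p₂ : G) * ((p₁ : G) * b) = (q₂ : G) := by rw [h₂]; group
    rw [← mul_assoc] at this
    rw [this]; exact q₂.2

/-- Binary meets exist in G with the full universal property. -/
lemma meet_two (hG : IsGarsideGroup P Δ) (a b : G) :
    ∃ d : G, gdvdL P d a ∧ gdvdL P d b ∧ ∀ c : G, gdvdL P c a → gdvdL P c b → gdvdL P c d := by
  obtain ⟨z, hz, hza, hzb⟩ := common_left_mult hG a b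
  obtain ⟨d₀, hd₀⟩ := hG.1.2.2.2.2.1 ⟨z * a, hza⟩ ⟨z * b, hzb⟩
  refine ⟨z⁻¹ * (d₀ : G), ?_, ?_, ?_⟩
  · obtain ⟨e, he⟩ := hd₀.1
    have heG : (d₀ : G) * e = z * a := by simpa using congrArg Subtype.val he
    show (z⁻¹ * (d₀ : G))⁻¹ * a ∈ P
    have : (z⁻¹ * (d₀ : G))⁻¹ * a = (e : G) := by
      have : a = z⁻¹ * ((d₀ : G) * e) := by rw [heG]; group
      rw [this]; group
    rw [this]; exact e.2
  · obtain ⟨e, he⟩ := hd₀.2.1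
    have heG : (d₀ : G) * e = z * b := by simpa using congrArg Subtype.val he
    show (z⁻¹ * (d₀ : G))⁻¹ * b ∈ P
    have : (z⁻¹ * (d₀ : G))⁻¹ * b = (e : G) := by
      have : b = z⁻¹ * ((d₀ : G) * e) := by rw [heG]; group
      rw [this]; group
    rw [this]; exact e.2
  · intro c hca hcb
    obtain ⟨w, pw, hw⟩ := left_fraction hG (z * c)
    -- w * (z * c) = pw ∈ P
    have hwzc : (w : G) * (z * c) ∈ P := by
      rw [hw]; simpa using pw.2
    have hwza : (w : G) * (z * a) ∈ P := by
      have heq : (w : G) * (z * a) = ((w : G) * (z * c)) * (c⁻¹ * a) := by group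
      rw [heq]; exact mul_mem hwzc hca
    have hwzb : (w : G) * (z * b) ∈ P := by
      have heq : (w : G) * (z * b) = ((w : G) * (z * c)) * (c⁻¹ * b) := by group
      rw [heq]; exact mul_mem hwzc hcb
    obtain ⟨D, hD⟩ := hG.1.2.2.2.2.1 ⟨(w : G) * (z * a), hwza⟩ ⟨(w : G) * (z * b), hwzb⟩
    -- w dvdL both, so w dvdL D
    have hwa : dvdL w (⟨(w : G) * (z * a), hwza⟩ : P) := ⟨⟨z * a, hza⟩, by ext; simp⟩
    have hwb : dvdL w (⟨(w : G) * (z * b), hwzb⟩ : P) := ⟨⟨z * b, hzb⟩, by ext; simp⟩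
    obtain ⟨E, hE⟩ := hD.2.2 w hwa hwb
    -- E dvdL ⟨z*a⟩ and ⟨z*b⟩, hence E dvdL d₀
    have hEa : dvdL E (⟨z * a, hza⟩ : P) := by
      obtain ⟨f, hf⟩ := hD.1
      refine ⟨f, ?_⟩
      have : w * (E * f) = w * ⟨z * a, hza⟩ := by
        rw [← mul_assoc, hE, hf]; ext; simp
      exact hG.1.2.1 w (E * f) ⟨z * a, hza⟩ this
    have hEb : dvdL E (⟨z * b, hzb⟩ : P) := by
      obtain ⟨f, hf⟩ := hD.2.1
      refine ⟨f, ?_⟩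
      have : w * (E * f) = w * ⟨z * b, hzb⟩ := by
        rw [← mul_assoc, hE, hf]; ext; simp
      exact hG.1.2.1 w (E * f) ⟨z * b, hzb⟩ this
    have hEd₀ : dvdL E d₀ := hd₀.2.2 E hEa hEb
    -- C := ⟨w*(z*c)⟩ dvdL D = w * E dvdL w * d₀, conclude
    obtain ⟨f₁, hf₁⟩ := hD.2.2 ⟨(w : G) * (z * c), hwzc⟩
      (⟨⟨c⁻¹ * a, hca⟩, by ext; simp; group⟩) (⟨⟨c⁻¹ * b, hcb⟩, by ext; simp; group⟩)
    obtain ⟨f₂, hf₂⟩ := hEd₀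
    -- so ⟨wzc⟩ * f₁ = D = w * E, and E * f₂ = d₀
    show c⁻¹ * (z⁻¹ * (d₀ : G)) ∈ P
    have hDG : ((w : G) * (z * c)) * (f₁ : G) = (D : G) := by
      simpa using congrArg Subtype.val hf₁
    have hEG : (w : G) * (E : G) = (D : G) := by simpa using congrArg Subtype.val hE
    have hf₂G : (E : G) * (f₂ : G) = (d₀ : G) := by simpa using congrArg Subtype.val hf₂
    have key : c⁻¹ * (z⁻¹ * (d₀ : G)) = (f₁ : G) * (f₂ : G) := by
      have hE' : (E : G) = (w : G)⁻¹ * (D : G) := by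
        rw [← hEG]; group
      rw [← hf₂G, hE', ← hDG]; group
    rw [key]; exact mul_mem f₁.2 f₂.2

end Aux2
section Aux3
variable {G : Type*} [Group G] {P : Submonoid G} {Δ : G}

/-- Meets of finite families exist in G. -/
lemma meet_fin (hG : IsGarsideGroup P Δ) (f : ℕ → G) :
    ∀ n : ℕ, 0 < n → ∃ c : G, (∀ i < n, gdvdL P c (f i)) ∧
      ∀ z : G, (∀ i < n, gdvdL P z (f i)) → gdvdL P z c := by
  intro n
  induction n with
  | zero => omega
  | succ k ih =>
    intro _
    rcases Nat.eq_zero_or_pos k with hk | hk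
    · subst hk
      refine ⟨f 0, ?_, ?_⟩
      · intro i hi
        interval_cases i
        exact gdvdL_refl (f 0)
      · intro z hz
        exact hz 0 (by omega)
    · obtain ⟨c', hc'1, hc'2⟩ := ih hk
      obtain ⟨d, hd1, hd2, hd3⟩ := meet_two hG c' (f k)
      refine ⟨d, ?_, ?_⟩
      · intro i hi
        rcases Nat.lt_succ_iff_lt_or_eq.mp hi with h | h
        · exact gdvdL_trans hd1 (hc'1 i h)
        · subst h; exact hd2
      · intro z hz
        exact hd3 z (hc'2 z fun i hi => hz i (by omega)) (hz k (by omega))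

/-- Key lemma: if Δ^{qn} ≤ x^n then some conjugate of x is ≥ Δ^q. -/
lemma key_lemma (hG : IsGarsideGroup P Δ) (x : G) (q : ℤ) (n : ℕ) (hn : 1 ≤ n)
    (hx : gdvdL P (Δ ^ (q * n)) (x ^ n)) :
    ∃ y : G, IsConj x y ∧ gdvdL P (Δ ^ q) y := by
  obtain ⟨hΔ, hGar⟩ := hG.2.2
  set f : ℕ → G := fun i => x ^ i * Δ ^ (-(q * i)) with hf
  obtain ⟨c, hc1, hc2⟩ := meet_fin hG f n hn
  -- c ≤ f j for every j ≤ n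
  have hfn : f n ∈ P := by
    have h1 : (Δ ^ (q * n))⁻¹ * x ^ n ∈ P := hx
    have heq : f n = Δ ^ (q * (n : ℤ)) * ((Δ ^ (q * (n : ℤ)))⁻¹ * x ^ (n : ℕ)) *
        Δ ^ (-(q * (n : ℤ))) := by
      simp only [hf]
      group
    rw [heq]
    exact tau_zpow hΔ hGar (q * n) h1
  have hcj : ∀ j ≤ n, gdvdL P c (f j) := by
    intro j hj
    rcases lt_or_eq_of_le hj with h | h
    · exact hc1 j h
    · subst h
      have hc0 : gdvdL P c (f 0) := hc1 0 (by omega)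
      have hf0 : f 0 = 1 := by simp [hf]
      rw [hf0] at hc0
      have h1fn : gdvdL P 1 (f j) := by simpa [gdvdL] using hfn
      exact gdvdL_trans hc0 h1fn
  -- show c * Δ^q ≤ x * c via the universal property
  have main : gdvdL P (x⁻¹ * (c * Δ ^ q)) c := by
    apply hc2
    intro i hi
    -- x⁻¹ * c * Δ^q ≤ f i  ⟺  c * Δ^q ≤ x * f i = f (i+1) * Δ^q
    have hstep : x * f i = f (i + 1) * Δ ^ q := by
      simp only [hf]
      rw [pow_succ']
      push_cast
      rw [mul_assoc, mul_assoc]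
      congr 1
      congr 1
      rw [← zpow_add]
      congr 1
      ring
    have hci : gdvdL P c (f (i + 1)) := hcj (i + 1) (by omega)
    show (x⁻¹ * (c * Δ ^ q))⁻¹ * f i ∈ P
    have heq2 : (x⁻¹ * (c * Δ ^ q))⁻¹ * f i = Δ ^ (-q) * (c⁻¹ * f (i + 1)) * Δ ^ (-(-q)) := by
      have : f i = x⁻¹ * (f (i + 1) * Δ ^ q) := by rw [← hstep]; group
      rw [this]
      group
    rw [heq2]
    exact tau_zpow hΔ hGar (-q) hci
  refine ⟨c⁻¹ * x * c, ?_, ?_⟩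
  · rw [isConj_iff]
    exact ⟨c⁻¹, by group⟩
  · show (Δ ^ q)⁻¹ * (c⁻¹ * x * c) ∈ P
    have heq3 : (Δ ^ q)⁻¹ * (c⁻¹ * x * c) = (x⁻¹ * (c * Δ ^ q))⁻¹ * c := by group
    rw [heq3]
    exact main

end Aux3
section Aux4
variable {G : Type*} [Group G] {P : Submonoid G} {Δ : G}

lemma gdvdL_pow (hΔ : Δ ∈ P) (hGar : IsGarsideElt (⟨Δ, hΔ⟩ : P)) (r : ℤ) (h : G)
    (hh : gdvdL P (Δ ^ r) h) (k : ℕ) : gdvdL P (Δ ^ (r * k)) (h ^ k) := by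
  induction k with
  | zero => simpa [gdvdL] using one_mem P
  | succ k ih =>
    show (Δ ^ (r * ((k : ℤ) + 1)))⁻¹ * h ^ (k + 1) ∈ P
    have heq : (Δ ^ (r * ((k : ℤ) + 1)))⁻¹ * h ^ (k + 1) =
        (Δ ^ (-r) * ((Δ ^ (r * (k : ℤ)))⁻¹ * h ^ k) * Δ ^ (-(-r))) * ((Δ ^ r)⁻¹ * h) := by
      rw [pow_succ]
      group
    rw [heq]
    exact mul_mem (tau_zpow hΔ hGar (-r) ih) hh

lemma conj_pow' {x y : G} (hc : IsConj x y) (n : ℕ) : IsConj (x ^ n) (y ^ n) := by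
  obtain ⟨z, hz⟩ := isConj_iff.mp hc
  refine isConj_iff.mpr ⟨z, ?_⟩
  rw [← hz]
  induction n with
  | zero => group
  | succ k ih => rw [pow_succ, pow_succ, ← ih]; group

lemma conj_pow_eq (z g : G) (n : ℕ) : (z * g * z⁻¹) ^ n = z * g ^ n * z⁻¹ := by
  induction n with
  | zero => group
  | succ k ih => rw [pow_succ, pow_succ, ih]; group

/-- Theorem (inf part): `r = ⌊m / n⌋`. -/
lemma inf_thm (hG : IsGarsideGroup P Δ) (g : G) (n : ℕ) (hn : 1 ≤ n) (r m : ℤ)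
    (hr : IsGreatest {t : ℤ | ∃ h : G, IsConj g h ∧ gdvdL P (Δ ^ t) h} r)
    (hm : IsGreatest {t : ℤ | ∃ h : G, IsConj (g ^ n) h ∧ gdvdL P (Δ ^ t) h} m) :
    r = ⌊(m : ℚ) / (n : ℚ)⌋ := by
  obtain ⟨hΔ, hGar⟩ := hG.2.2
  have hnQ : (0 : ℚ) < (n : ℚ) := by exact_mod_cast hn
  -- r * n ≤ m
  have hrn : r * n ≤ m := by
    obtain ⟨h, hconj, hdvd⟩ := hr.1
    exact hm.2 ⟨h ^ n, conj_pow' hconj n, gdvdL_pow hΔ hGar r h hdvd n⟩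
  -- q := ⌊m/n⌋ is in the r-set
  set q : ℤ := ⌊(m : ℚ) / (n : ℚ)⌋ with hqdef
  have hqn : q * n ≤ m := by
    have h1 : (q : ℚ) ≤ (m : ℚ) / (n : ℚ) := Int.floor_le _
    have h2 : (q : ℚ) * (n : ℚ) ≤ (m : ℚ) := by
      rw [← div_mul_cancel₀ (m : ℚ) (ne_of_gt hnQ)]
      exact mul_le_mul_of_nonneg_right h1 (le_of_lt hnQ)
    exact_mod_cast h2
  have hqr : q ≤ r := by
    obtain ⟨h, hconj, hdvd⟩ := hm.1
    have hdvd' : gdvdL P (Δ ^ (q * n)) h := by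
      refine gdvdL_trans ?_ hdvd
      show (Δ ^ (q * (n : ℤ)))⁻¹ * Δ ^ m ∈ P
      have heq : (Δ ^ (q * (n : ℤ)))⁻¹ * Δ ^ m = Δ ^ (m - q * n) := by
        rw [← zpow_neg, ← zpow_add]
        congr 1
        ring
      rw [heq]
      exact zpow_mem_of_nonneg hΔ (by omega)
    obtain ⟨z, hz⟩ := isConj_iff.mp hconj
    have hxn : (z * g * z⁻¹) ^ n = h := by
      rw [conj_pow_eq, hz]
    obtain ⟨y, hy1, hy2⟩ := key_lemma hG (z * g * z⁻¹) q n hn (by rw [hxn]; exact hdvd')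
    exact hr.2 ⟨y, (isConj_iff.mpr ⟨z, rfl⟩).trans hy1, hy2⟩
  -- r ≤ q
  have hrq : r ≤ q := by
    rw [hqdef]
    rw [Int.le_floor]
    rw [le_div_iff₀ hnQ]
    exact_mod_cast hrn
  omega

/-- Duality: least sup set element for g gives greatest inf set element for g⁻¹. -/
lemma sup_to_inf (hG : IsGarsideGroup P Δ) (g : G) (s : ℤ)
    (hs : IsLeast {t : ℤ | ∃ h : G, IsConj g h ∧ gdvdL P h (Δ ^ t)} s) :
    IsGreatest {t : ℤ | ∃ h : G, IsConj g⁻¹ h ∧ gdvdL P (Δ ^ t) h} (-s) := by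
  obtain ⟨hΔ, hGar⟩ := hG.2.2
  have hiff : ∀ t : ℤ, (∃ h : G, IsConj g h ∧ gdvdL P h (Δ ^ t)) ↔
      (∃ h : G, IsConj g⁻¹ h ∧ gdvdL P (Δ ^ (-t)) h) := by
    intro t
    constructor
    · rintro ⟨h, hc, hd⟩
      refine ⟨h⁻¹, ?_, ?_⟩
      · obtain ⟨z, hz⟩ := isConj_iff.mp hc
        exact isConj_iff.mpr ⟨z, by rw [← hz]; group⟩
      · show (Δ ^ (-t))⁻¹ * h⁻¹ ∈ P
        have heq : (Δ ^ (-t))⁻¹ * h⁻¹ = Δ ^ t * (h⁻¹ * Δ ^ t) * Δ ^ (-t) := by group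
        rw [heq]
        exact tau_zpow hΔ hGar t hd
    · rintro ⟨h, hc, hd⟩
      refine ⟨h⁻¹, ?_, ?_⟩
      · obtain ⟨z, hz⟩ := isConj_iff.mp hc
        exact isConj_iff.mpr ⟨z, by rw [← hz]; group⟩
      · show (h⁻¹)⁻¹ * Δ ^ t ∈ P
        have heq : (h⁻¹)⁻¹ * Δ ^ t = Δ ^ (-t) * ((Δ ^ (-t))⁻¹ * h) * Δ ^ (-(-t)) := by group
        rw [heq]
        exact tau_zpow hΔ hGar (-t) hd
  constructor
  · exact (hiff s).mp hs.1
  · intro t ht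
    have h1 : ∃ h : G, IsConj g h ∧ gdvdL P h (Δ ^ (-t)) := by
      apply (hiff (-t)).mpr
      simpa using ht
    have := hs.2 h1
    omega

end Aux4

/-- **Corollary 6.2.** `inf_s(g) = ⌊inf_s(gⁿ)/n⌋` and `sup_s(g) = ⌈sup_s(gⁿ)/n⌉`;
in particular `inf_s(g) ≥ 0` iff `inf_s(gⁿ) ≥ 0`, and `sup_s(g) ≤ 0` iff
`sup_s(gⁿ) ≤ 0`. -/
theorem infs_sups_floor_ceil {G : Type*} [Group G] (P : Submonoid G) (Δ : G)
    (hG : IsGarsideGroup P Δ) (g : G) (n : ℕ) (hn : 1 ≤ n) (r m s u : ℤ)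
    (hr : IsGreatest {t : ℤ | ∃ h : G, IsConj g h ∧ gdvdL P (Δ ^ t) h} r)
    (hm : IsGreatest {t : ℤ | ∃ h : G, IsConj (g ^ n) h ∧ gdvdL P (Δ ^ t) h} m)
    (hs : IsLeast {t : ℤ | ∃ h : G, IsConj g h ∧ gdvdL P h (Δ ^ t)} s)
    (hu : IsLeast {t : ℤ | ∃ h : G, IsConj (g ^ n) h ∧ gdvdL P h (Δ ^ t)} u) :
    r = ⌊(m : ℚ) / (n : ℚ)⌋ ∧ s = ⌈(u : ℚ) / (n : ℚ)⌉ ∧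
    (0 ≤ r ↔ 0 ≤ m) ∧ (s ≤ 0 ↔ u ≤ 0) := by
  have hnQ : (0 : ℚ) < (n : ℚ) := by exact_mod_cast hn
  have h1 : r = ⌊(m : ℚ) / (n : ℚ)⌋ := inf_thm hG g n hn r m hr hm
  have hs' := sup_to_inf hG g s hs
  have hu' := sup_to_inf hG (g ^ n) u hu
  rw [← inv_pow] at hu'
  have h2 : -s = ⌊((-u : ℤ) : ℚ) / (n : ℚ)⌋ := inf_thm hG g⁻¹ n hn (-s) (-u) hs' hu'
  have h3 : s = ⌈(u : ℚ) / (n : ℚ)⌉ := by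
    have heq : ((-u : ℤ) : ℚ) / (n : ℚ) = -((u : ℚ) / (n : ℚ)) := by push_cast; ring
    rw [heq, Int.floor_neg] at h2
    omega
  refine ⟨h1, h3, ?_, ?_⟩
  · rw [h1, Int.le_floor]
    push_cast
    rw [le_div_iff₀ hnQ, zero_mul]
    exact ⟨fun h => by exact_mod_cast h, fun h => by exact_mod_cast h⟩
  · rw [h3, Int.ceil_le]
    push_cast
    rw [div_le_iff₀ hnQ, zero_mul]
    exact ⟨fun h => by exact_mod_cast h, fun h => by exact_mod_cast h⟩
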